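/- There is an absolute constant C > 0 with the following property: for every dimension d ≥ 2 and every ε ∈ (0,1], there exists a finite set N of unit vectors in the Euclidean space ℝ^d with |N| ≤ C/√ε, such that for every unit vector w ∈ ℝ^d there is some n ∈ N with |⟨w, n⟩| ≤ sin(√ε); that is, every direction makes an angle of at most √ε with one of the |N| hyperplanes through the origin with normals in N. -/

import Mathlib

open RealInnerProductSpace

noncomputable def nvAux (d : ℕ) [NeZero d] (θ : ℝ) : EuclideanSpace ℝ (Fin d) :=
  Real.cos θ • EuclideanSpace.single 0 1 + Real.sin θ • EuclideanSpace.single 1 1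

lemma inner_nvAux (d : ℕ) [NeZero d] (θ : ℝ) (w : EuclideanSpace ℝ (Fin d)) :
    ⟪w, nvAux d θ⟫ = Real.cos θ * w 0 + Real.sin θ * w 1 := by
  simp [nvAux, inner_add_right, real_inner_smul_right,
    EuclideanSpace.inner_single_right]

lemma norm_nvAux (d : ℕ) [NeZero d] (hd : 2 ≤ d) (θ : ℝ) : ‖nvAux d θ‖ = 1 := by
  have h01 : (0 : Fin d) ≠ 1 := by
    refine Fin.ne_of_val_ne ?_
    simp [Fin.val_one', Nat.mod_eq_of_lt (by omega : 1 < d)]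
  have hinner : ⟪nvAux d θ, nvAux d θ⟫ = 1 := by
    rw [inner_nvAux]
    simp [nvAux, EuclideanSpace.single_apply, h01, h01.symm]
    ring_nf
    rw [add_comm]
    exact Real.sin_sq_add_cos_sq θ
  have h := real_inner_self_eq_norm_sq (nvAux d θ)
  rw [hinner] at h
  have hn : (0:ℝ) ≤ ‖nvAux d θ‖ := norm_nonneg _
  nlinarith

lemma abs_sin_sub_sin (x y : ℝ) : |Real.sin x - Real.sin y| ≤ |x - y| := by
  rw [Real.sin_sub_sin]
  have h1 : |Real.sin ((x - y) / 2)| ≤ |(x - y) / 2| := Real.abs_sin_le_abs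
  have h2 : |Real.cos ((x + y) / 2)| ≤ 1 := Real.abs_cos_le_one _
  calc |2 * Real.sin ((x - y) / 2) * Real.cos ((x + y) / 2)|
      = 2 * |Real.sin ((x - y) / 2)| * |Real.cos ((x + y) / 2)| := by
        rw [abs_mul, abs_mul, abs_two]
    _ ≤ 2 * |(x - y) / 2| * 1 := by
        apply mul_le_mul _ h2 (abs_nonneg _) (by positivity)
        nlinarith [abs_nonneg (Real.sin ((x-y)/2))]
    _ = |x - y| := by rw [abs_div, mul_one]; simp; ring

lemma abs_cos_sub_cos (x y : ℝ) : |Real.cos x - Real.cos y| ≤ |x - y| := by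
  rw [Real.cos_sub_cos]
  have h1 : |Real.sin ((x - y) / 2)| ≤ |(x - y) / 2| := Real.abs_sin_le_abs
  have h2 : |Real.sin ((x + y) / 2)| ≤ 1 := Real.abs_sin_le_one _
  calc |(-2) * Real.sin ((x + y) / 2) * Real.sin ((x - y) / 2)|
      = 2 * |Real.sin ((x - y) / 2)| * |Real.sin ((x + y) / 2)| := by
        rw [abs_mul, abs_mul, abs_neg, abs_two]; ring
    _ ≤ 2 * |(x - y) / 2| * 1 := by
        apply mul_le_mul _ h2 (abs_nonneg _) (by positivity)
        nlinarith [abs_nonneg (Real.sin ((x-y)/2))]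
    _ = |x - y| := by rw [abs_div, mul_one]; simp; ring

theorem hyperplane_family_covers_directions :
    ∃ C : ℝ, 0 < C ∧
      ∀ d : ℕ, 2 ≤ d → ∀ ε : ℝ, 0 < ε → ε ≤ 1 →
        ∃ N : Finset (EuclideanSpace ℝ (Fin d)),
          (∀ n ∈ N, ‖n‖ = 1) ∧
          (N.card : ℝ) ≤ C / Real.sqrt ε ∧
          ∀ w : EuclideanSpace ℝ (Fin d), ‖w‖ = 1 →
            ∃ n ∈ N, |⟪w, n⟫| ≤ Real.sin (Real.sqrt ε) := by
  refine ⟨4 * Real.pi / 3 + 2, by positivity, ?_⟩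
  intro d hd ε hε hε1
  classical
  haveI : NeZero d := ⟨by omega⟩
  set t := Real.sqrt ε with ht
  have ht0 : 0 < t := Real.sqrt_pos.2 hε
  have ht1 : t ≤ 1 := by
    rw [ht, show (1:ℝ) = Real.sqrt 1 by simp]
    exact Real.sqrt_le_sqrt hε1
  set s := Real.sin t with hs
  -- lower bound on s
  have hslb : 3 / 4 * t ≤ s := by
    have h := Real.sin_gt_sub_cube ht0
    nlinarith [pow_le_one₀ (le_of_lt ht0) ht1 (n := 3), sq_nonneg t,
      mul_le_one₀ ht1 (le_of_lt ht0) ht1]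
  have hs0 : 0 < s := lt_of_lt_of_le (by nlinarith) hslb
  have hπ := Real.pi_pos
  set m : ℕ := ⌈Real.pi / s⌉₊ with hm
  have hm1 : 1 ≤ m := Nat.one_le_ceil_iff.2 (by positivity)
  have hmR : Real.pi / s ≤ (m : ℝ) := Nat.le_ceil _
  have hm0R : (0:ℝ) < m := by exact_mod_cast hm1
  set δ : ℝ := Real.pi / m with hδ
  have hδ0 : 0 < δ := by positivity
  have hδs : δ ≤ s := by
    rw [hδ, div_le_iff₀ hm0R]
    calc Real.pi = s * (Real.pi / s) := by field_simp
      _ ≤ s * m := by nlinarith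
  -- the net
  set N : Finset (EuclideanSpace ℝ (Fin d)) :=
    (Finset.range (m + 1)).image (fun k : ℕ => nvAux d ((k : ℝ) * δ)) with hN
  refine ⟨N, ?_, ?_, ?_⟩
  · intro n hn
    rw [hN, Finset.mem_image] at hn
    obtain ⟨k, -, rfl⟩ := hn
    exact norm_nvAux d hd _
  · have hcard : (N.card : ℝ) ≤ (m : ℝ) + 1 := by
      have := Finset.card_image_le (s := Finset.range (m + 1))
        (f := fun k : ℕ => nvAux d ((k : ℝ) * δ))
      rw [Finset.card_range] at this
      exact_mod_cast this
    have hmub : (m : ℝ) ≤ Real.pi / s + 1 := le_of_lt (Nat.ceil_lt_add_one (by positivity))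
    have h1 : Real.pi / s ≤ 4 * Real.pi / 3 / t := by
      rw [div_le_div_iff₀ hs0 ht0]
      nlinarith
    have h2 : (2:ℝ) ≤ 2 / t := by
      rw [le_div_iff₀ ht0]; nlinarith
    calc (N.card : ℝ) ≤ (m : ℝ) + 1 := hcard
      _ ≤ Real.pi / s + 2 := by linarith
      _ ≤ 4 * Real.pi / 3 / t + 2 / t := by linarith
      _ = (4 * Real.pi / 3 + 2) / t := by ring
  · intro w hw
    set a := w 0 with ha
    set b := w 1 with hb
    have habs : ∀ i : Fin d, |w i| ≤ 1 := by
      intro i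
      have h := abs_real_inner_le_norm w (EuclideanSpace.single i (1:ℝ))
      rw [EuclideanSpace.inner_single_right] at h
      simpa [hw, EuclideanSpace.norm_single] using h
    set f : ℝ → ℝ := fun θ => Real.cos θ * a + Real.sin θ * b with hf
    have hfc : ContinuousOn f (Set.Icc 0 Real.pi) := by fun_prop
    have hf0 : f 0 = a := by simp [hf]
    have hfπ : f Real.pi = -a := by simp [hf]
    -- find a zero of f in [0, π]
    have hzero : ∃ θ ∈ Set.Icc (0:ℝ) Real.pi, f θ = 0 := by
      rcases le_or_gt 0 a with hc | hc
      · have := intermediate_value_Icc' (le_of_lt hπ) hfc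
        have h0 : (0:ℝ) ∈ Set.Icc (f Real.pi) (f 0) := by
          rw [hf0, hfπ]; constructor <;> linarith
        obtain ⟨θ, hθ, hθ0⟩ := this h0
        exact ⟨θ, hθ, hθ0⟩
      · have := intermediate_value_Icc (le_of_lt hπ) hfc
        have h0 : (0:ℝ) ∈ Set.Icc (f 0) (f Real.pi) := by
          rw [hf0, hfπ]; constructor <;> linarith
        obtain ⟨θ, hθ, hθ0⟩ := this h0
        exact ⟨θ, hθ, hθ0⟩
    obtain ⟨θ, ⟨hθ0, hθπ⟩, hfθ⟩ := hzero
    -- nearest grid point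
    set x : ℝ := θ / δ with hx
    have hx0 : 0 ≤ x := by positivity
    have hxm : x ≤ m := by
      rw [hx, div_le_iff₀ hδ0, hδ]
      field_simp
      linarith
    set k : ℕ := ⌊x + 1/2⌋₊ with hk
    have hkle : k ≤ m := by
      have : x + 1/2 ≤ (m:ℝ) + 1/2 := by linarith
      have h2 : (⌊x + 1/2⌋₊ : ℕ) ≤ ⌊(m:ℝ) + 1/2⌋₊ := Nat.floor_le_floor this
      have h3 : ⌊(m:ℝ) + 1/2⌋₊ = m := by
        rw [Nat.floor_eq_iff (by positivity)]
        constructor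
        · linarith
        · push_cast; linarith
      omega
    have hknear : |(k : ℝ) - x| ≤ 1/2 := by
      have h1 : (k : ℝ) ≤ x + 1/2 := Nat.floor_le (by positivity)
      have h2 : x + 1/2 < (k : ℝ) + 1 := Nat.lt_floor_add_one _
      rw [abs_le]; constructor <;> linarith
    have hθnear : |(k : ℝ) * δ - θ| ≤ δ / 2 := by
      have : (k : ℝ) * δ - θ = ((k:ℝ) - x) * δ := by
        rw [hx]; field_simp
      rw [this, abs_mul, abs_of_pos hδ0]
      calc |(k:ℝ) - x| * δ ≤ (1/2) * δ := by nlinarith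
        _ = δ / 2 := by ring
    refine ⟨nvAux d ((k : ℝ) * δ), ?_, ?_⟩
    · rw [hN, Finset.mem_image]
      exact ⟨k, Finset.mem_range.2 (by omega), rfl⟩
    · rw [inner_nvAux]
      have key : |Real.cos ((k:ℝ)*δ) * a + Real.sin ((k:ℝ)*δ) * b|
          = |f ((k:ℝ)*δ) - f θ| := by rw [hfθ]; simp [hf]
      rw [← ha, ← hb, key]
      have hexp : f ((k:ℝ)*δ) - f θ
          = (Real.cos ((k:ℝ)*δ) - Real.cos θ) * a
            + (Real.sin ((k:ℝ)*δ) - Real.sin θ) * b := by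
        simp [hf]; ring
      have hca := abs_cos_sub_cos ((k:ℝ)*δ) θ
      have hsa := abs_sin_sub_sin ((k:ℝ)*δ) θ
      have h1 : |f ((k:ℝ)*δ) - f θ| ≤ δ/2 + δ/2 := by
        rw [hexp]
        calc |(Real.cos ((k:ℝ)*δ) - Real.cos θ) * a
              + (Real.sin ((k:ℝ)*δ) - Real.sin θ) * b|
            ≤ |(Real.cos ((k:ℝ)*δ) - Real.cos θ) * a|
              + |(Real.sin ((k:ℝ)*δ) - Real.sin θ) * b| := abs_add_le _ _
          _ = |Real.cos ((k:ℝ)*δ) - Real.cos θ| * |a|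
              + |Real.sin ((k:ℝ)*δ) - Real.sin θ| * |b| := by rw [abs_mul, abs_mul]
          _ ≤ δ/2 * 1 + δ/2 * 1 := by
              have h0a := habs 0
              have h1b := habs 1
              rw [← ha] at h0a; rw [← hb] at h1b
              apply add_le_add <;>
                exact mul_le_mul (le_trans (by assumption) hθnear) (by assumption)
                  (abs_nonneg _) (by linarith)
          _ = δ/2 + δ/2 := by ring
      calc |f ((k:ℝ)*δ) - f θ| ≤ δ/2 + δ/2 := h1
        _ = δ := by ring
        _ ≤ s := hδs
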